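/- Let σ : {0,…,n} → {0,…,m} be any map of finite sets, with cyclic descent number k = cdesc(σ) = #{ j ∈ {0,…,n} : σ(j+1) < σ(j) } (indices mod n+1, so σ(n+1) := σ(0)). Then there exists a nondecreasing map f : Z → Z with f(x + (n+1)) = f(x) + k(m+1) for all x and f(x) ≡ σ(x) mod (m+1) for all x ∈ {0,…,n}; moreover k is the smallest integer with this property, and for this minimal k the map f with f(0) = σ(0) is unique, given by f(x) = σ(x) + (m+1)·c(x) where c(x) = #{ j < x : σ(j+1) < σ(j) }. -/

import Mathlib

namespace Stmt18Aux

open Fin.NatCast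

variable (n m : ℕ) (σ : Fin (n + 1) → Fin (m + 1))

def E (j : ℕ) : ℤ :=
  (σ ((j : Fin (n+1)) + 1) : ℤ) - (σ (j : Fin (n+1)) : ℤ)
    + if σ ((j : Fin (n+1)) + 1) < σ (j : Fin (n+1)) then (m+1 : ℤ) else 0

def G : ℕ → ℤ
  | 0 => (σ 0 : ℤ)
  | t+1 => G t + E n m σ t

lemma E_nonneg (j : ℕ) : 0 ≤ E n m σ j := by
  unfold E
  split <;> rename_i h
  · have h1 : (0:ℤ) ≤ (σ ((j : Fin (n+1)) + 1) : ℤ) := by positivity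
    have h2 : (σ (j : Fin (n+1)) : ℤ) ≤ m := by exact_mod_cast Nat.le_of_lt_succ (σ _).isLt
    omega
  · have h' : (σ (j : Fin (n+1)) : ℕ) ≤ (σ ((j : Fin (n+1)) + 1) : ℕ) :=
      Nat.le_of_not_lt (fun hh => h (Fin.lt_def.mpr hh))
    have : (σ (j : Fin (n+1)) : ℤ) ≤ (σ ((j : Fin (n+1)) + 1) : ℤ) := by exact_mod_cast h'
    omega

lemma E_lt (j : ℕ) : E n m σ j < (m:ℤ)+1 := by
  unfold E
  split <;> rename_i h
  · have h' : (σ ((j : Fin (n+1)) + 1) : ℕ) < (σ (j : Fin (n+1)) : ℕ) := Fin.lt_def.mp h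
    have : (σ ((j : Fin (n+1)) + 1) : ℤ) < (σ (j : Fin (n+1)) : ℤ) := by exact_mod_cast h'
    omega
  · have h1 : (σ ((j : Fin (n+1)) + 1) : ℤ) ≤ m := by
      exact_mod_cast Nat.le_of_lt_succ (σ _).isLt
    have h2 : (0:ℤ) ≤ (σ (j : Fin (n+1)) : ℤ) := by positivity
    omega

lemma G_mono {s t : ℕ} (h : s ≤ t) : G n m σ s ≤ G n m σ t := by
  induction t with
  | zero => simp [Nat.le_zero.mp h]
  | succ t ih =>
    rcases Nat.lt_or_ge s (t+1) with h' | h'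
    · have := ih (Nat.lt_succ_iff.mp h')
      have := E_nonneg n m σ t
      show G n m σ s ≤ G n m σ t + E n m σ t
      omega
    · have : s = t+1 := le_antisymm h h'
      simp [this]

lemma E_mod (j : ℕ) :
    Int.ModEq (m+1) (E n m σ j) ((σ ((j : Fin (n+1)) + 1) : ℤ) - (σ (j : Fin (n+1)) : ℤ)) := by
  unfold E
  split
  · exact (Int.modEq_iff_dvd.mpr ⟨-1, by ring⟩)
  · simp

lemma sum_E : ∑ j ∈ Finset.range (n+1), E n m σ j =
    ((Finset.univ.filter fun j : Fin (n + 1) => σ (j + 1) < σ j).card : ℤ) * (m+1) := by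
  rw [← Fin.sum_univ_eq_sum_range (fun j => E n m σ j) (n+1)]
  have hcast : ∀ i : Fin (n+1), (((i:ℕ) : Fin (n+1))) = i := fun i => Fin.cast_val_eq_self i
  have : ∀ i : Fin (n+1), E n m σ (i:ℕ)
      = ((σ (i + 1) : ℤ) - (σ i : ℤ)) + (if σ (i+1) < σ i then ((m:ℤ)+1) else 0) := by
    intro i; unfold E; rw [hcast i]
  rw [Finset.sum_congr rfl fun i _ => this i, Finset.sum_add_distrib]
  have tele : ∑ i : Fin (n+1), ((σ (i + 1) : ℤ) - (σ i : ℤ)) = 0 := by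
    rw [Finset.sum_sub_distrib]
    have : ∑ i : Fin (n+1), (σ (i + 1) : ℤ) = ∑ i : Fin (n+1), (σ i : ℤ) :=
      Fintype.sum_bijective (· + 1) (Equiv.addRight (1 : Fin (n+1))).bijective _ _ (fun _ => rfl)
    omega
  rw [tele, zero_add, ← Finset.sum_filter]
  rw [Finset.sum_const, nsmul_eq_mul]

lemma G_eq_sum (t : ℕ) : G n m σ t = (σ 0 : ℤ) + ∑ j ∈ Finset.range t, E n m σ j := by
  induction t with
  | zero => simp [G]
  | succ t ih => rw [Finset.sum_range_succ]; show G n m σ t + E n m σ t = _; omega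


lemma G_succ (t : ℕ) : G n m σ (t+1) = G n m σ t + E n m σ t := rfl

def K : ℕ := (Finset.univ.filter fun j : Fin (n + 1) => σ (j + 1) < σ j).card

def F : ℤ → ℤ := fun x =>
  (x / ((n:ℤ)+1)) * ((K n m σ : ℤ) * ((m:ℤ)+1)) + G n m σ (x % ((n:ℤ)+1)).toNat

lemma F_shift (x : ℤ) : F n m σ (x + ((n:ℤ)+1)) = F n m σ x + (K n m σ : ℤ) * ((m:ℤ)+1) := by
  have hN : ((n:ℤ)+1) ≠ 0 := by positivity
  unfold F
  have h1 : (x + ((n:ℤ)+1)) / ((n:ℤ)+1) = x / ((n:ℤ)+1) + 1 := by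
    have := Int.add_mul_ediv_right x 1 hN
    simpa using this
  have h2 : (x + ((n:ℤ)+1)) % ((n:ℤ)+1) = x % ((n:ℤ)+1) := by
    have := @Int.add_mul_emod_self_right x 1 ((n:ℤ)+1)
    simpa using this
  rw [h1, h2]; ring

lemma G_top : G n m σ (n+1) = (σ 0 : ℤ) + (K n m σ : ℤ) * ((m:ℤ)+1) := by
  rw [G_eq_sum, sum_E]; rfl

lemma F_mono : Monotone (F n m σ) := by
  apply monotone_int_of_le_succ
  intro x
  have hN : (0:ℤ) < (n:ℤ)+1 := by positivity
  have hr0 : 0 ≤ x % ((n:ℤ)+1) := Int.emod_nonneg x (by positivity)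
  have hrN : x % ((n:ℤ)+1) < (n:ℤ)+1 := Int.emod_lt_of_pos x hN
  have hx := Int.emod_add_mul_ediv x ((n:ℤ)+1)
  rcases lt_or_eq_of_le (by omega : x % ((n:ℤ)+1) + 1 ≤ (n:ℤ)+1) with h | h
  · have key : (x+1) / ((n:ℤ)+1) = x / ((n:ℤ)+1) ∧ (x+1) % ((n:ℤ)+1) = x % ((n:ℤ)+1) + 1 := by
      rw [Int.ediv_emod_unique hN]
      exact ⟨by linarith, by omega, h⟩
    unfold F
    rw [key.1, key.2]
    have ht : (x % ((n:ℤ)+1) + 1).toNat = (x % ((n:ℤ)+1)).toNat + 1 := by omega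
    rw [ht, G_succ]
    have := E_nonneg n m σ (x % ((n:ℤ)+1)).toNat
    omega
  · have key : (x+1) / ((n:ℤ)+1) = x / ((n:ℤ)+1) + 1 ∧ (x+1) % ((n:ℤ)+1) = 0 := by
      rw [Int.ediv_emod_unique hN]
      refine ⟨by linarith, le_refl _, hN⟩
    unfold F
    rw [key.1, key.2]
    have ht : (x % ((n:ℤ)+1)).toNat = n := by omega
    rw [ht]
    have h1 : G n m σ n ≤ (σ 0 : ℤ) + (K n m σ : ℤ) * ((m:ℤ)+1) := by
      rw [← G_top, G_succ]
      have := E_nonneg n m σ n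
      omega
    have h0 : G n m σ ((0:ℤ).toNat) = (σ 0 : ℤ) := rfl
    rw [h0]
    nlinarith [h1]

lemma F_at (j : Fin (n+1)) : F n m σ (j : ℤ) = G n m σ (j : ℕ) := by
  unfold F
  have h0 : ((j:ℕ):ℤ) ≥ 0 := by positivity
  have hl : ((j:ℕ):ℤ) < (n:ℤ)+1 := by exact_mod_cast j.isLt
  rw [Int.ediv_eq_zero_of_lt h0 hl, Int.emod_eq_of_lt h0 hl]
  simp

lemma G_eq (t : ℕ) : G n m σ t = (σ (t : Fin (n+1)) : ℤ)
    + ∑ j ∈ Finset.range t,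
        (if σ ((j:Fin (n+1)) + 1) < σ (j:Fin (n+1)) then ((m:ℤ)+1) else 0) := by
  induction t with
  | zero => norm_num [G]
  | succ t ih =>
    rw [G_succ, ih, Finset.sum_range_succ]
    have hc : ((t+1 : ℕ) : Fin (n+1)) = (t : Fin (n+1)) + 1 := by push_cast; ring
    rw [hc]
    unfold E
    ring

lemma card_eq (x : Fin (n+1)) :
    ((Finset.range (x:ℕ)).filter fun j : ℕ => σ ((j:Fin (n+1)) + 1) < σ (j:Fin (n+1))).card
    = (Finset.univ.filter fun j : Fin (n + 1) => (j : ℕ) < (x : ℕ) ∧ σ (j + 1) < σ j).card := by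
  refine Finset.card_bij' (fun j _ => ((j : Fin (n+1)))) (fun b _ => (b : ℕ)) ?_ ?_ ?_ ?_
  · intro a ha
    simp only [Finset.mem_filter, Finset.mem_range] at ha
    have hv : ((a : Fin (n+1)) : ℕ) = a := by
      simp [Fin.val_natCast, Nat.mod_eq_of_lt (by omega : a < n+1)]
    simp only [Finset.mem_filter, Finset.mem_univ, true_and, hv]
    exact ⟨lt_of_lt_of_le ha.1 (le_refl _), ha.2⟩
  · intro b hb
    simp only [Finset.mem_filter, Finset.mem_univ, true_and] at hb
    simp only [Finset.mem_filter, Finset.mem_range]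
    exact ⟨hb.1, by rw [Fin.cast_val_eq_self b]; exact hb.2⟩
  · intro a ha
    simp only [Finset.mem_filter, Finset.mem_range] at ha
    simp [Fin.val_natCast, Nat.mod_eq_of_lt (by omega : a < n+1)]
  · intro b _
    exact Fin.cast_val_eq_self b

lemma G_eq' (x : Fin (n+1)) : G n m σ (x:ℕ) = (σ x : ℤ)
    + ((m:ℤ)+1) *
      ((Finset.univ.filter fun j : Fin (n + 1) => (j : ℕ) < (x : ℕ) ∧ σ (j + 1) < σ j).card : ℤ) := by
  rw [G_eq, Fin.cast_val_eq_self x, ← card_eq, ← Finset.sum_filter,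
    Finset.sum_const, nsmul_eq_mul]
  ring


lemma fmod_nat (f : ℤ → ℤ)
    (hmod : ∀ j : Fin (n + 1), Int.ModEq ((m:ℤ) + 1) (f (j : ℤ)) (σ j : ℤ))
    (t : ℕ) (ht : t ≤ n) : Int.ModEq ((m:ℤ)+1) (f (t:ℤ)) (σ (t : Fin (n+1)) : ℤ) := by
  have h := hmod (t : Fin (n+1))
  have hv : (((t : Fin (n+1)) : ℕ) : ℤ) = (t:ℤ) := by
    simp [Fin.val_natCast, Nat.mod_eq_of_lt (by omega : t < n+1)]
  rwa [hv] at h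

lemma step (f : ℤ → ℤ) (hmono : Monotone f) (k' : ℕ)
    (hsh : ∀ x : ℤ, f (x + ((n:ℤ) + 1)) = f x + (k':ℤ) * ((m:ℤ) + 1))
    (hmod : ∀ j : Fin (n + 1), Int.ModEq ((m:ℤ) + 1) (f (j : ℤ)) (σ j : ℤ))
    (j : ℕ) (hj : j ≤ n) :
    E n m σ j ≤ f ((j:ℤ)+1) - f (j:ℤ) := by
  have hM : (0:ℤ) < (m:ℤ)+1 := by positivity
  have h0 : Int.ModEq ((m:ℤ)+1) (f (j:ℤ)) (σ (j : Fin (n+1)) : ℤ) :=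
    fmod_nat n m σ f hmod j hj
  have h1 : Int.ModEq ((m:ℤ)+1) (f ((j:ℤ)+1)) (σ ((j : Fin (n+1)) + 1) : ℤ) := by
    rcases Nat.lt_or_ge j n with h | h
    · have hh := fmod_nat n m σ f hmod (j+1) (by omega)
      have hc : ((j+1 : ℕ) : Fin (n+1)) = (j : Fin (n+1)) + 1 := by push_cast; ring
      rw [hc] at hh
      have harg : ((j+1 : ℕ) : ℤ) = (j:ℤ)+1 := by push_cast; ring
      rwa [harg] at hh
    · have hjn : j = n := le_antisymm hj h
      rw [hjn]
      have hf : f ((n:ℤ)+1) = f 0 + (k':ℤ)*((m:ℤ)+1) := by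
        have := hsh 0; simpa using this
      have h00 : Int.ModEq ((m:ℤ)+1) (f 0) (σ 0 : ℤ) := by
        have := fmod_nat n m σ f hmod 0 (by omega)
        simpa using this
      have hlast : ((n : Fin (n+1)) + 1) = 0 := by
        ext; simp [Fin.add_def, Fin.val_natCast]
      rw [hlast, hf]
      exact (Int.modEq_iff_dvd.mpr ⟨-(k':ℤ), by ring⟩).trans h00
  have hd0 : 0 ≤ f ((j:ℤ)+1) - f (j:ℤ) := by
    have := hmono (by linarith : (j:ℤ) ≤ (j:ℤ)+1); omega
  have hdm : Int.ModEq ((m:ℤ)+1) (f ((j:ℤ)+1) - f (j:ℤ)) (E n m σ j) :=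
    (h1.sub h0).trans (E_mod n m σ j).symm
  have hE0 := E_nonneg n m σ j
  have hEl := E_lt n m σ j
  obtain ⟨t, ht⟩ := Int.modEq_iff_dvd.mp hdm
  rcases le_or_gt t 0 with h|h
  · have : ((m:ℤ)+1) * t ≤ 0 := mul_nonpos_of_nonneg_of_nonpos (le_of_lt hM) h
    linarith
  · have h1t : (1:ℤ) ≤ t := h
    have : ((m:ℤ)+1) ≤ ((m:ℤ)+1) * t := le_mul_of_one_le_right (le_of_lt hM) h1t
    linarith

end Stmt18Aux


open Stmt18Aux



/-- Lift of maps of finite sets and the cyclic descent number. Let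
`σ : {0,…,n} → {0,…,m}` with cyclic descent number
`k = #{j : σ(j+1) < σ(j)}` (indices cyclic mod `n+1`) and
`c x = #{j < x : σ(j+1) < σ(j)}`. Then there is a nondecreasing `f : ℤ → ℤ` with
`f (x + (n+1)) = f x + k(m+1)` and `f x ≡ σ x mod (m+1)` on `{0,…,n}`; `k` is the
smallest integer with this property; and for this `k`, the lift with `f 0 = σ 0` is
unique, given by `f x = σ x + (m+1) c x`. -/
theorem stmt18 (n m : ℕ) (σ : Fin (n + 1) → Fin (m + 1)) :
    let k : ℕ := (Finset.univ.filter fun j : Fin (n + 1) => σ (j + 1) < σ j).card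
    let c : Fin (n + 1) → ℕ := fun x =>
      (Finset.univ.filter fun j : Fin (n + 1) => (j : ℕ) < (x : ℕ) ∧ σ (j + 1) < σ j).card
    (∃ f : ℤ → ℤ, Monotone f ∧ (∀ x : ℤ, f (x + (n + 1)) = f x + k * (m + 1)) ∧
        ∀ j : Fin (n + 1), Int.ModEq (m + 1) (f (j : ℤ)) (σ j : ℤ)) ∧
    (∀ k' : ℕ,
      (∃ f : ℤ → ℤ, Monotone f ∧ (∀ x : ℤ, f (x + (n + 1)) = f x + k' * (m + 1)) ∧
        ∀ j : Fin (n + 1), Int.ModEq (m + 1) (f (j : ℤ)) (σ j : ℤ)) → k ≤ k') ∧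
    (∀ f : ℤ → ℤ, Monotone f → (∀ x : ℤ, f (x + (n + 1)) = f x + k * (m + 1)) →
      (∀ j : Fin (n + 1), Int.ModEq (m + 1) (f (j : ℤ)) (σ j : ℤ)) →
      f 0 = ((σ 0 : ℕ) : ℤ) →
      ∀ j : Fin (n + 1), f (j : ℤ) = (σ j : ℤ) + (m + 1) * (c j : ℤ)) := by
  intro k c
  have hM : (0:ℤ) < (m:ℤ)+1 := by positivity
  have hkK : k = K n m σ := rfl
  have sum_d : ∀ (f : ℤ → ℤ) (k' : ℕ),
      (∀ x : ℤ, f (x + ((n:ℤ) + 1)) = f x + (k':ℤ) * ((m:ℤ) + 1)) →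
      ∑ j ∈ Finset.range (n+1), (f ((j:ℤ)+1) - f (j:ℤ)) = (k':ℤ) * ((m:ℤ)+1) := by
    intro f k' hsh
    have h := Finset.sum_range_sub (fun t : ℕ => f (t:ℤ)) (n+1)
    have h2 : ∑ j ∈ Finset.range (n+1), (f ((j:ℤ)+1) - f (j:ℤ))
        = f (((n+1:ℕ)):ℤ) - f ((0:ℕ):ℤ) := by
      rw [← h]
      refine Finset.sum_congr rfl fun i _ => ?_
      have : ((i+1:ℕ):ℤ) = (i:ℤ)+1 := by push_cast; ring
      rw [this]
    rw [h2]
    have h3 := hsh 0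
    rw [zero_add] at h3
    have : (((n+1:ℕ)):ℤ) = (n:ℤ)+1 := by push_cast; ring
    rw [this, h3]
    norm_num
  refine ⟨⟨F n m σ, F_mono n m σ, fun x => F_shift n m σ x, fun j => ?_⟩, ?_, ?_⟩
  · rw [F_at n m σ j, G_eq' n m σ j]
    exact Int.modEq_iff_dvd.mpr ⟨-((c j : ℤ)), by ring⟩
  · rintro k' ⟨f, hmono, hsh, hmod⟩
    have hle : ∑ j ∈ Finset.range (n+1), E n m σ j
        ≤ ∑ j ∈ Finset.range (n+1), (f ((j:ℤ)+1) - f (j:ℤ)) :=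
      Finset.sum_le_sum fun j hj =>
        step n m σ f hmono k' hsh hmod j (by exact Nat.lt_succ_iff.mp (Finset.mem_range.mp hj))
    rw [sum_E, sum_d f k' hsh] at hle
    have : (k:ℤ) ≤ (k':ℤ) := le_of_mul_le_mul_right (by rw [hkK]; exact hle) hM
    exact_mod_cast this
  · intro f hmono hsh hmod hf0 j
    have hzero : ∀ i ∈ Finset.range (n+1), (f ((i:ℤ)+1) - f (i:ℤ)) - E n m σ i = 0 := by
      rw [← Finset.sum_eq_zero_iff_of_nonneg (fun i hi => by
        have := step n m σ f hmono k hsh hmod i (Nat.lt_succ_iff.mp (Finset.mem_range.mp hi))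
        omega)]
      rw [Finset.sum_sub_distrib, sum_d f k hsh, sum_E, hkK]
      unfold Stmt18Aux.K
      ring
    have hG : ∀ t : ℕ, t ≤ n+1 → f (t:ℤ) = G n m σ t := by
      intro t ht
      induction t with
      | zero => simpa [G] using hf0
      | succ t ih =>
        have h1 := hzero t (Finset.mem_range.mpr (by omega))
        have h2 := ih (by omega)
        have harg : ((t+1:ℕ):ℤ) = (t:ℤ)+1 := by push_cast; ring
        rw [harg, G_succ]
        omega
    have := hG (j:ℕ) (by omega)
    rw [this, G_eq' n m σ j]
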